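/- Let R be a commutative Noetherian ring, I a directed partially ordered set, and (M_i)_{i∈I} a directed system of R-modules with direct limit M = colim M_i. Then every associated prime of M is an associated prime of some M_i; that is, Ass_R(colim M_i) ⊆ ⋃_{i∈I} Ass_R(M_i). -/

import Mathlib

/-- Associated primes of a direct limit of modules over a Noetherian ring are contained in the
union of the associated primes of the modules in the directed system. -/
theorem stmt_0 {R : Type} [CommRing R] [IsNoetherianRing R]
    {ι : Type} [PartialOrder ι] [IsDirected ι (· ≤ ·)] [DecidableEq ι]
    (G : ι → Type) [∀ i, AddCommGroup (G i)] [∀ i, Module R (G i)]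
    (f : ∀ i j, i ≤ j → G i →ₗ[R] G j)
    [DirectedSystem G fun i j h => f i j h] :
    associatedPrimes R (Module.DirectLimit G f) ⊆ ⋃ i : ι, associatedPrimes R (G i) := by
  rintro p hp'
  obtain ⟨hp, x, hx⟩ := isAssociatedPrime_iff.mp hp'
  by_cases hne : Nonempty ι
  · obtain ⟨i, m, rfl⟩ := Module.DirectLimit.exists_of x
    -- p is finitely generated
    obtain ⟨s, hs⟩ := (isNoetherianRing_iff_ideal_fg R).mp ‹_› p
    -- each generator kills m in some bigger module
    have key : ∀ r ∈ s, ∃ j, ∃ hij : i ≤ j, f i j hij (r • m) = 0 := by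
      intro r hr
      have hrp : r ∈ p := by rw [← hs]; exact Ideal.subset_span hr
      have : r • Module.DirectLimit.of R ι G f i m = 0 := by
        rw [hx, Submodule.mem_colon_singleton, Submodule.mem_bot] at hrp; exact hrp
      rw [← map_smul] at this
      exact Module.DirectLimit.of.zero_exact this
    choose j hij hj using key
    -- common upper bound
    obtain ⟨k, hk⟩ := (s.attach.image (fun r : {r // r ∈ s} => j r.1 r.2) ∪ {i}).exists_le
    have hik : i ≤ k := hk i (by simp)
    refine Set.mem_iUnion.mpr ⟨k, isAssociatedPrime_iff.mpr ⟨hp, f i k hik m, le_antisymm ?_ ?_⟩⟩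
    · rw [← hs, Ideal.span_le]
      intro r hr
      have hjk : j r hr ≤ k := hk _ (Finset.mem_union_left _ (Finset.mem_image.mpr ⟨⟨r, hr⟩, Finset.mem_attach _ _, rfl⟩))
      have : f i k hik (r • m) = 0 := by
        rw [← DirectedSystem.map_map (f := fun i j h => f i j h) (hij r hr) hjk, hj r hr,
          map_zero]
      rw [SetLike.mem_coe, Submodule.mem_colon_singleton, Submodule.mem_bot, ← map_smul]
      exact this
    · intro r hr
      rw [Submodule.mem_colon_singleton, Submodule.mem_bot] at hr
      have h2 : f i k hik (r • m) = 0 := by rw [map_smul, hr]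
      have : r • Module.DirectLimit.of R ι G f i m = 0 := by
        calc r • Module.DirectLimit.of R ι G f i m
            = Module.DirectLimit.of R ι G f i (r • m) := (map_smul _ _ _).symm
          _ = Module.DirectLimit.of R ι G f k (f i k hik (r • m)) :=
              (Module.DirectLimit.of_f (hij := hik)).symm
          _ = 0 := by rw [h2, map_zero]
      rw [hx, Submodule.mem_colon_singleton, Submodule.mem_bot, this]
  · exact absurd hp'
      (haveI : IsEmpty ι := not_nonempty_iff.mp hne
       haveI : Subsingleton (Module.DirectLimit G f) :=
         (Quot.mk_surjective (r := (Module.DirectLimit.moduleCon f).r)).subsingleton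
       not_isAssociatedPrime_of_subsingleton)
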